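/- Every first-order formula α(x_0) (over the frame language, with one free variable) obtained from atoms x_l ∈ E, with E quasi-safe, using only conjunction, disjunction and restricted universal quantification, is the local first-order correspondent of some generalized Sahlqvist formula: there is a generalized Sahlqvist formula φ such that for every Kripke frame F and point w, F, w ⊨ φ under every valuation iff F ⊨ α[w]. -/

import Mathlib

set_option autoImplicit true

universe u v w

/-- Modal formulas over modality indices `Λ` and propositional variables `V`. -/
inductive MF (Λ : Type u) (V : Type v) : Type (max u v)
  | var : V → MF Λ V
  | top : MF Λ V
  | bot : MF Λ V
  | and : MF Λ V → MF Λ V → MF Λ V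
  | or  : MF Λ V → MF Λ V → MF Λ V
  | neg : MF Λ V → MF Λ V
  | imp : MF Λ V → MF Λ V → MF Λ V
  | dia : Λ → MF Λ V → MF Λ V
  | box : Λ → MF Λ V → MF Λ V

namespace MF
variable {Λ : Type u} {V : Type v}

/-- The set of propositional variables occurring in a modal formula. -/
def vars : MF Λ V → Set V
  | var p => {p}
  | top => ∅
  | bot => ∅
  | and a b => vars a ∪ vars b
  | or a b => vars a ∪ vars b
  | neg a => vars a
  | imp a b => vars a ∪ vars b
  | dia _ a => vars a
  | box _ a => vars a

end MF

/-- Positive modal formulas: built without `¬` and `→`. -/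
inductive Positive {Λ : Type u} {V : Type v} : MF Λ V → Prop
  | var (p : V) : Positive (.var p)
  | top : Positive .top
  | bot : Positive .bot
  | and {a b} : Positive a → Positive b → Positive (.and a b)
  | or {a b} : Positive a → Positive b → Positive (.or a b)
  | dia (l) {a} : Positive a → Positive (.dia l a)
  | box (l) {a} : Positive a → Positive (.box l a)

/-- A Kripke frame with accessibility relations indexed by `Λ`. -/
structure Frame (Λ : Type u) where
  W : Type w
  R : Λ → W → W → Prop

/-- Kripke satisfaction `F, x, θ ⊨ φ`. -/
def sat {Λ : Type u} {V : Type v} (F : Frame Λ) (θ : V → Set F.W) : F.W → MF Λ V → Prop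
  | x, .var p => x ∈ θ p
  | _, .top => True
  | _, .bot => False
  | x, .and a b => sat F θ x a ∧ sat F θ x b
  | x, .or a b => sat F θ x a ∨ sat F θ x b
  | x, .neg a => ¬ sat F θ x a
  | x, .imp a b => sat F θ x a → sat F θ x b
  | x, .dia l a => ∃ y, F.R l x y ∧ sat F θ y a
  | x, .box l a => ∀ y, F.R l x y → sat F θ y a

/-- `BoxF φ p S`: `φ` is a box-formula with head `p`, in which the set of variables
occurring not as the head is `S`. -/
inductive BoxF {Λ : Type u} {V : Type v} : MF Λ V → V → Set V → Prop
  | var (p : V) : BoxF (.var p) p ∅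
  | imp {POS ψ p S} : Positive POS → BoxF ψ p S → BoxF (.imp POS ψ) p (MF.vars POS ∪ S)
  | box (l) {ψ p S} : BoxF ψ p S → BoxF (.box l ψ) p S

/-- `RegBF r φ p`: relative to the rank assignment `r`, `φ` is a regular box-formula
with head `p` (of rank `r p`): all variables of the positive antecedents have rank `< r p`. -/
inductive RegBF {Λ : Type u} {V : Type v} (r : V → ℕ) : MF Λ V → V → Prop
  | var (p : V) : RegBF r (.var p) p
  | imp {POS ψ p} : Positive POS → (∀ q ∈ MF.vars POS, r q < r p) →
      RegBF r ψ p → RegBF r (.imp POS ψ) p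
  | box (l) {ψ p} : RegBF r ψ p → RegBF r (.box l ψ) p

/-- The edge relation of the dependency graph of a set `A` of box-formulas:
`p → q` iff `p` occurs (not as the head) in some member of `A` with head `q`. -/
def depEdge {Λ : Type u} {V : Type v} (A : Set (MF Λ V)) (p q : V) : Prop :=
  ∃ φ ∈ A, ∃ S, BoxF φ q S ∧ p ∈ S

/-- A set of box-formulas is regular if its dependency graph has no oriented cycle. -/
def RegularSet {Λ : Type u} {V : Type v} (A : Set (MF Λ V)) : Prop :=
  ∀ p : V, ¬ Relation.TransGen (depEdge A) p p

/-- `R_λ^{-1}(A) = {u : ∃ v, u R_λ v ∧ v ∈ A}`. -/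
def Rinv {Λ : Type u} (F : Frame Λ) (l : Λ) (A : Set F.W) : Set F.W :=
  {u | ∃ v, F.R l u v ∧ v ∈ A}

/-- `R_λ^□(A) = {u : ∀ v, u R_λ v → v ∈ A}`. -/
def RboxOp {Λ : Type u} (F : Frame Λ) (l : Λ) (A : Set F.W) : Set F.W :=
  {u | ∀ v, F.R l u v → v ∈ A}

/-- `R_λ(A) = {u : ∃ v, v R_λ u ∧ v ∈ A}`. -/
def Rfwd {Λ : Type u} (F : Frame Λ) (l : Λ) (A : Set F.W) : Set F.W :=
  {u | ∃ v, F.R l v u ∧ v ∈ A}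

/-- The interpretation of the expression `KP^{POS}` in a frame `F`, the set variables
`P^l_i` being interpreted by `P`.  (Junk value `∅` on non-positive constructors.) -/
def KPsem {Λ : Type u} (F : Frame Λ) (P : ℕ × ℕ → Set F.W) : MF Λ (ℕ × ℕ) → Set F.W
  | .var q => P q
  | .top => Set.univ
  | .bot => ∅
  | .and a b => KPsem F P a ∩ KPsem F P b
  | .or a b => KPsem F P a ∪ KPsem F P b
  | .dia l a => Rinv F l (KPsem F P a)
  | .box l a => RboxOp F l (KPsem F P a)
  | .neg _ => ∅
  | .imp _ _ => ∅

/-- The interpretation of the expression `KV^φ` in a frame `F`: the set variables `P^l_i`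
are interpreted by `P` and the extra variable `#` by the second argument.
(Junk value `∅` on constructors that do not occur in regular box-formulas.) -/
def KVsem {Λ : Type u} (F : Frame Λ) (P : ℕ × ℕ → Set F.W) : MF Λ (ℕ × ℕ) → Set F.W → Set F.W
  | .var _, X => X
  | .imp POS ψ, X => KVsem F P ψ (X ∩ KPsem F P POS)
  | .box l ψ, X => KVsem F P ψ (Rfwd F l X)
  | _, _ => ∅

/-- The semantic minimal valuation: given points `g j` and sets `f j` of regular
box-formulas to be verified at `g j`, `thetaMinSem F g f k i` is the minimal value of the
variable `p^k_i`; it is defined by recursion on the rank `k` as the union, over all `j` and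
all `φ ∈ f j` with head `p^k_i`, of `KV^φ(g j)` computed with the minimal values of the
variables of lower rank. -/
noncomputable def thetaMinSem {Λ : Type u} (F : Frame Λ) {ι : Type w} (g : ι → F.W)
    (f : ι → Set (MF Λ (ℕ × ℕ))) : ℕ → ℕ → Set F.W :=
  fun k => Nat.strongRecOn (motive := fun _ => ℕ → Set F.W) k fun k ih i =>
    ⋃ (j : ι), ⋃ φ ∈ f j, ⋃ (_ : RegBF Prod.fst φ (k, i)),
      KVsem F (fun q => if h : q.1 < k then ih q.1 h q.2 else ∅) φ {g j}

/-- `L`-expressions: terms of the language `L` with individual variables `x_i` (`i : ℕ`),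
constants `⊤, ⊥`, unary `R_λ^{-1}`, `R_λ^□`, `R_λ` and binary `∩`, `∪`. -/
inductive LExp (Λ : Type u) : Type u
  | var : ℕ → LExp Λ
  | top : LExp Λ
  | bot : LExp Λ
  | inter : LExp Λ → LExp Λ → LExp Λ
  | union : LExp Λ → LExp Λ → LExp Λ
  | rinv : Λ → LExp Λ → LExp Λ
  | rbox : Λ → LExp Λ → LExp Λ
  | rfw : Λ → LExp Λ → LExp Λ

namespace LExp
variable {Λ : Type u}

/-- Denotation of an `L`-expression in a frame `F`, the variable `x_i` denoting the
singleton of the point `g i`. -/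
def den (F : Frame Λ) (g : ℕ → F.W) : LExp Λ → Set F.W
  | var i => {g i}
  | top => Set.univ
  | bot => ∅
  | inter a b => den F g a ∩ den F g b
  | union a b => den F g a ∪ den F g b
  | rinv l a => Rinv F l (den F g a)
  | rbox l a => RboxOp F l (den F g a)
  | rfw l a => Rfwd F l (den F g a)

/-- The set of (indices of) individual variables occurring in an `L`-expression. -/
def evars : LExp Λ → Set ℕ
  | var i => {i}
  | top => ∅
  | bot => ∅
  | inter a b => evars a ∪ evars b
  | union a b => evars a ∪ evars b
  | rinv _ a => evars a
  | rbox _ a => evars a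
  | rfw _ a => evars a

end LExp

/-- The subexpression relation on `L`-expressions. -/
inductive Subexp {Λ : Type u} : LExp Λ → LExp Λ → Prop
  | refl (e : LExp Λ) : Subexp e e
  | interL {e a b} : Subexp e a → Subexp e (.inter a b)
  | interR {e a b} : Subexp e b → Subexp e (.inter a b)
  | unionL {e a b} : Subexp e a → Subexp e (.union a b)
  | unionR {e a b} : Subexp e b → Subexp e (.union a b)
  | rinv (l) {e a} : Subexp e a → Subexp e (.rinv l a)
  | rbox (l) {e a} : Subexp e a → Subexp e (.rbox l a)
  | rfw (l) {e a} : Subexp e a → Subexp e (.rfw l a)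

/-- `SafeFor e`: `e` is "safe for" the ambient expression, i.e. `e` is a variable, or
`R_λ(e')` with `e'` safe for it, or an intersection one of whose components is safe for it. -/
inductive SafeFor {Λ : Type u} : LExp Λ → Prop
  | var (i : ℕ) : SafeFor (.var i)
  | rfw (l) {a} : SafeFor a → SafeFor (.rfw l a)
  | interL {a b} : SafeFor a → SafeFor (.inter a b)
  | interR {a b} : SafeFor b → SafeFor (.inter a b)

/-- An `L`-expression is safe if it is safe for itself and the argument of every
subexpression of the form `R_λ(ψ)` is safe for it. -/
def Safe {Λ : Type u} (e : LExp Λ) : Prop :=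
  SafeFor e ∧ ∀ l a, Subexp (.rfw l a) e → SafeFor a

mutual
  /-- The class `K`: the least class of `L`-expressions containing the variables and closed
  under `S ↦ R_λ(S)` and `S ↦ S ∩ E` for `E` a positive combination of members of `K`. -/
  inductive InK {Λ : Type u} : LExp Λ → Prop
    | var (i : ℕ) : InK (.var i)
    | rfw (l : Λ) {S : LExp Λ} : InK S → InK (.rfw l S)
    | inter {S E : LExp Λ} : InK S → PosOfK E → InK (.inter S E)
  /-- Positive combinations of members of `K`: built from members of `K` using only
  `∩`, `∪`, `R_λ^{-1}`, `R_λ^□`, `⊤`, `⊥`. -/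
  inductive PosOfK {Λ : Type u} : LExp Λ → Prop
    | ofK {e : LExp Λ} : InK e → PosOfK e
    | top : PosOfK .top
    | bot : PosOfK .bot
    | inter {a b} : PosOfK a → PosOfK b → PosOfK (.inter a b)
    | union {a b} : PosOfK a → PosOfK b → PosOfK (.union a b)
    | rinv (l) {a} : PosOfK a → PosOfK (.rinv l a)
    | rbox (l) {a} : PosOfK a → PosOfK (.rbox l a)
end

/-- Quasi-safe `L`-expressions: positive combinations of safe expressions, i.e. built from
safe expressions using only `∩`, `∪`, `R_λ^{-1}`, `R_λ^□`, `⊤`, `⊥`. -/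
inductive QuasiSafe {Λ : Type u} : LExp Λ → Prop
  | safe {e : LExp Λ} : Safe e → QuasiSafe e
  | top : QuasiSafe .top
  | bot : QuasiSafe .bot
  | inter {a b} : QuasiSafe a → QuasiSafe b → QuasiSafe (.inter a b)
  | union {a b} : QuasiSafe a → QuasiSafe b → QuasiSafe (.union a b)
  | rinv (l) {a} : QuasiSafe a → QuasiSafe (.rinv l a)
  | rbox (l) {a} : QuasiSafe a → QuasiSafe (.rbox l a)

/-- `ReplOne i ψ φ φ'`: `φ'` is the result of replacing one occurrence of the variable
`x_i` in `φ` by `ψ`. -/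
inductive ReplOne {Λ : Type u} (i : ℕ) (ψ : LExp Λ) : LExp Λ → LExp Λ → Prop
  | here : ReplOne i ψ (.var i) ψ
  | interL {a a' b} : ReplOne i ψ a a' → ReplOne i ψ (.inter a b) (.inter a' b)
  | interR {a b b'} : ReplOne i ψ b b' → ReplOne i ψ (.inter a b) (.inter a b')
  | unionL {a a' b} : ReplOne i ψ a a' → ReplOne i ψ (.union a b) (.union a' b)
  | unionR {a b b'} : ReplOne i ψ b b' → ReplOne i ψ (.union a b) (.union a b')
  | rinv (l) {a a'} : ReplOne i ψ a a' → ReplOne i ψ (.rinv l a) (.rinv l a')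
  | rbox (l) {a a'} : ReplOne i ψ a a' → ReplOne i ψ (.rbox l a) (.rbox l a')
  | rfw (l) {a a'} : ReplOne i ψ a a' → ReplOne i ψ (.rfw l a) (.rfw l a')

/-- A finite union of `L`-expressions (empty union is `⊥`). -/
def unionList {Λ : Type u} : List (LExp Λ) → LExp Λ
  | [] => .bot
  | e :: es => .union e (unionList es)

/-- `UnionOfSafe e`: `e` is a finite union of safe expressions. -/
inductive UnionOfSafe {Λ : Type u} : LExp Λ → Prop
  | bot : UnionOfSafe .bot
  | safe {e : LExp Λ} : Safe e → UnionOfSafe e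
  | union {a b} : UnionOfSafe a → UnionOfSafe b → UnionOfSafe (.union a b)

/-- Syntactic `KP^{POS}`: the `L`-expression obtained from the positive formula `POS` by
replacing each set variable `P^l_i` by the `L`-expression `KF (l, i)`.
(Junk value on non-positive constructors.) -/
def KPsub {Λ : Type u} (KF : ℕ × ℕ → LExp Λ) : MF Λ (ℕ × ℕ) → LExp Λ
  | .var q => KF q
  | .top => .top
  | .bot => .bot
  | .and a b => .inter (KPsub KF a) (KPsub KF b)
  | .or a b => .union (KPsub KF a) (KPsub KF b)
  | .dia l a => .rinv l (KPsub KF a)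
  | .box l a => .rbox l (KPsub KF a)
  | .neg _ => .bot
  | .imp _ _ => .bot

/-- Syntactic `KVF^φ(t)`: the `L`-expression obtained from `KV^φ` by substituting the
`L`-expression `t` for `#` and `KF (l, i)` for each set variable `P^l_i`.
(Junk value on constructors that do not occur in regular box-formulas.) -/
def KVFsyn {Λ : Type u} (KF : ℕ × ℕ → LExp Λ) : MF Λ (ℕ × ℕ) → LExp Λ → LExp Λ
  | .var _, t => t
  | .imp POS ψ, t => KVFsyn KF ψ (.inter t (KPsub KF POS))
  | .box l ψ, t => KVFsyn KF ψ (.rfw l t)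
  | _, _ => .bot

open scoped Classical in
/-- The syntactic minimal valuation `KF_f^{p^k_i}` for variables `x_0, …, x_{n-1}` and
`f` assigning to each variable a finite set of regular box-formulas: defined by recursion on
the rank `k` as the union, over all `j < n` and all `φ ∈ f j` with head `p^k_i`, of
`KVF_f^φ(x_j)`, which is `KV^φ` with `x_j` substituted for `#` and `KF_f^{p^l_m}`
substituted for each `P^l_m` with `l < k`. -/
noncomputable def KFsyn {Λ : Type u} (n : ℕ) (f : ℕ → Finset (MF Λ (ℕ × ℕ))) :
    ℕ → ℕ → LExp Λ :=
  fun k => Nat.strongRecOn (motive := fun _ => ℕ → LExp Λ) k fun k ih i =>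
    unionList (((List.range n).flatMap fun j =>
      ((f j).toList.filter fun φ => decide (RegBF Prod.fst φ (k, i))).map fun φ =>
        KVFsyn (fun q => if h : q.1 < k then ih q.1 h q.2 else LExp.bot) φ (LExp.var j)))

/-- The expressions substituted for the set variables `P^l_m`, `l < k`, in `KVF`:
the syntactic minimal valuations of the lower ranks. -/
noncomputable def lowKF {Λ : Type u} (n : ℕ) (f : ℕ → Finset (MF Λ (ℕ × ℕ))) (k : ℕ) :
    ℕ × ℕ → LExp Λ :=
  fun q => if q.1 < k then KFsyn n f q.1 q.2 else LExp.bot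

/-- `KVFat n f φ j k` is the `L`-expression `KVF_f^φ(x_j)` for `φ` a regular box-formula
of rank `k`. -/
noncomputable def KVFat {Λ : Type u} (n : ℕ) (f : ℕ → Finset (MF Λ (ℕ × ℕ)))
    (φ : MF Λ (ℕ × ℕ)) (j k : ℕ) : LExp Λ :=
  KVFsyn (lowKF n f k) φ (.var j)

/-- A labelled tree-like structure: a set of vertices with relations indexed by `Λ`,
a root, and a label function assigning to every vertex a set of labels from `α`. -/
structure LabTree (Λ : Type u) (α : Type v) where
  V : Type
  R : Λ → V → V → Prop
  root : V
  label : V → Set α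

/-- Derivation trees witnessing that a formula is built from base formulas using only
`∧` and `◇_λ`. -/
inductive BuiltT (Λ : Type u) (V : Type v) : Type (max u v)
  | base : MF Λ V → BuiltT Λ V
  | and : BuiltT Λ V → BuiltT Λ V → BuiltT Λ V
  | dia : Λ → BuiltT Λ V → BuiltT Λ V

/-- The modal formula described by a derivation tree. -/
def BuiltT.formula {Λ : Type u} {V : Type v} : BuiltT Λ V → MF Λ V
  | base φ => φ
  | and a b => .and a.formula b.formula
  | dia l a => .dia l a.formula

/-- The derivation tree uses only base formulas from `A`. -/
def BuiltT.Ok {Λ : Type u} {V : Type v} (A : Set (MF Λ V)) : BuiltT Λ V → Prop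
  | base φ => φ ∈ A
  | and a b => a.Ok A ∧ b.Ok A
  | dia _ a => a.Ok A

/-- Helper for gluing two labelled trees at their roots: the relation on the disjoint sum,
with the edges out of the second root re-attached to the first root. -/
def glueR {Λ : Type u} {W₁ W₂ : Type} (R₁ : Λ → W₁ → W₁ → Prop) (R₂ : Λ → W₂ → W₂ → Prop)
    (r₁ : W₁) (r₂ : W₂) (l : Λ) : W₁ ⊕ W₂ → W₁ ⊕ W₂ → Prop
  | Sum.inl a, Sum.inl b => R₁ l a b
  | Sum.inr a, Sum.inr b => R₂ l a b
  | Sum.inl a, Sum.inr b => a = r₁ ∧ R₂ l r₂ b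
  | Sum.inr _, Sum.inl _ => False

open Classical in
/-- Helper for gluing two labelled trees at their roots: the label function, the glued root
receiving the union of the two root labels. -/
noncomputable def glueLab {α : Type w} {W₁ W₂ : Type} (L₁ : W₁ → Set α) (L₂ : W₂ → Set α)
    (r₁ : W₁) (r₂ : W₂) : W₁ ⊕ W₂ → Set α
  | Sum.inl a => if a = r₁ then L₁ r₁ ∪ L₂ r₂ else L₁ a
  | Sum.inr b => L₂ b

/-- Helper for prefixing a labelled tree with a new root: the relation on `Option W`,
with an `R_{l₀}`-edge from the new root `none` to the old root `r`. -/
def prefR {Λ : Type u} {W : Type} (R : Λ → W → W → Prop) (l₀ : Λ) (r : W) (l : Λ) :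
    Option W → Option W → Prop
  | none, some w => l = l₀ ∧ w = r
  | some a, some b => R l a b
  | _, _ => False

/-- Helper for prefixing a labelled tree with a new root: the label function, the new root
getting the empty label. -/
def prefLab {α : Type w} {W : Type} (L : W → Set α) : Option W → Set α
  | none => ∅
  | some a => L a

/-- The reduced syntactical tree of a formula built from base formulas using `∧` and `◇_λ`:
a single root labelled `{a}` for a base formula `a`; for a conjunction, the two trees
with their roots identified (labels united); for `◇_λ ψ`, a new root with empty label and an
`R_λ`-edge to the root of the tree of `ψ`. -/
noncomputable def TreeOf {Λ : Type u} {V : Type v} : BuiltT Λ V → LabTree Λ (MF Λ V)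
  | .base φ =>
      { V := Unit, R := fun _ _ _ => False, root := (), label := fun _ => {φ} }
  | .and b₁ b₂ =>
      let T₁ := TreeOf b₁
      let T₂ := TreeOf b₂
      { V := {v : T₁.V ⊕ T₂.V // v ≠ Sum.inr T₂.root},
        R := fun l u v => glueR T₁.R T₂.R T₁.root T₂.root l u.1 v.1,
        root := ⟨Sum.inl T₁.root, by exact Sum.inl_ne_inr⟩,
        label := fun v => glueLab T₁.label T₂.label T₁.root T₂.root v.1 }
  | .dia l b =>
      let T := TreeOf b
      { V := Option T.V,
        R := fun l' u v => prefR T.R l T.root l' u v,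
        root := none,
        label := fun v => prefLab T.label v }

/-- Restrictedly positive first-order formulas over the frame language: built from atoms
`y ∈ E` (`E` an `L`-expression) using `∧`, `∨` and the restricted quantifiers
`(∀ y ◁_λ x)` and `(∃ y ◁_λ x)`. -/
inductive KrF (Λ : Type u) : Type u
  | atom : ℕ → LExp Λ → KrF Λ
  | and : KrF Λ → KrF Λ → KrF Λ
  | or : KrF Λ → KrF Λ → KrF Λ
  | all : ℕ → Λ → ℕ → KrF Λ → KrF Λ
  | ex : ℕ → Λ → ℕ → KrF Λ → KrF Λ

namespace KrF
variable {Λ : Type u}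

/-- Truth of a restrictedly positive formula in a frame under an assignment `g` of points to
individual variables; the atom `y ∈ E` is read via the `#`-translation, i.e. as membership
of `g y` in the denotation of `E`. -/
def holds (F : Frame Λ) : (ℕ → F.W) → KrF Λ → Prop
  | g, atom y E => g y ∈ E.den F g
  | g, and a b => holds F g a ∧ holds F g b
  | g, or a b => holds F g a ∨ holds F g b
  | g, all y l x β => ∀ w, F.R l (g x) w → holds F (Function.update g y w) β
  | g, ex y l x β => ∃ w, F.R l (g x) w ∧ holds F (Function.update g y w) β

/-- Free variables. -/
def fv : KrF Λ → Set ℕ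
  | atom y E => insert y E.evars
  | and a b => fv a ∪ fv b
  | or a b => fv a ∪ fv b
  | all y _ x β => insert x (fv β \ {y})
  | ex y _ x β => insert x (fv β \ {y})

/-- Bound variables. -/
def bv : KrF Λ → Set ℕ
  | atom _ _ => ∅
  | and a b => bv a ∪ bv b
  | or a b => bv a ∪ bv b
  | all y _ _ β => insert y (bv β)
  | ex y _ _ β => insert y (bv β)

/-- No two distinct quantifier occurrences bind the same variable. -/
def CleanBound : KrF Λ → Prop
  | atom _ _ => True
  | and a b => CleanBound a ∧ CleanBound b ∧ bv a ∩ bv b = ∅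
  | or a b => CleanBound a ∧ CleanBound b ∧ bv a ∩ bv b = ∅
  | all y _ _ β => CleanBound β ∧ y ∉ bv β
  | ex y _ _ β => CleanBound β ∧ y ∉ bv β

/-- Clean formulas: no variable occurs both free and bound, and no two distinct quantifier
occurrences bind the same variable. -/
def Clean (φ : KrF Λ) : Prop := fv φ ∩ bv φ = ∅ ∧ CleanBound φ

/-- All the `L`-expressions occurring in atoms of the formula satisfy `P`. -/
def AtomsAll (P : LExp Λ → Prop) : KrF Λ → Prop
  | atom _ E => P E
  | and a b => AtomsAll P a ∧ AtomsAll P b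
  | or a b => AtomsAll P a ∧ AtomsAll P b
  | all _ _ _ β => AtomsAll P β
  | ex _ _ _ β => AtomsAll P β

/-- Quantifier-free formulas (built from atoms using only `∧` and `∨`). -/
def QFree : KrF Λ → Prop
  | atom _ _ => True
  | and a b => QFree a ∧ QFree b
  | or a b => QFree a ∧ QFree b
  | all _ _ _ _ => False
  | ex _ _ _ _ => False

/-- Formulas built from atoms using only `∧`, `∨` and restricted universal quantification
(no existential quantifier). -/
def NoEx : KrF Λ → Prop
  | atom _ _ => True
  | and a b => NoEx a ∧ NoEx b
  | or a b => NoEx a ∧ NoEx b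
  | all _ _ _ β => NoEx β
  | ex _ _ _ _ => False

/-- `GKok U e φ`: every variable occurring in an `L`-expression of an atom of `φ` is
inherently universal. Here `U` is the set of variables that are inherently universal so far
(initially the free variables) and `e` records whether we are within the scope of an
existential quantifier. -/
def GKok : Set ℕ → Bool → KrF Λ → Prop
  | U, _, atom _ E => E.evars ⊆ U
  | U, e, and a b => GKok U e a ∧ GKok U e b
  | U, e, or a b => GKok U e a ∧ GKok U e b
  | U, false, all y _ _ β => GKok (insert y U) false β
  | U, true, all _ _ _ β => GKok U true β
  | U, _, ex _ _ _ β => GKok U true β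

end KrF

/-- A generalized Kracht formula with free variables: clean, restrictedly positive with safe
atoms, and in every atom `y ∈ E` all variables of `E` are inherently universal. -/
def IsGenKrachtFV {Λ : Type u} (α : KrF Λ) : Prop :=
  α.Clean ∧ α.AtomsAll Safe ∧ α.GKok α.fv false

/-- A generalized Kracht formula: a generalized Kracht formula with free variables whose
only free variable is `x0`. -/
def IsGenKracht {Λ : Type u} (α : KrF Λ) (x0 : ℕ) : Prop :=
  IsGenKrachtFV α ∧ α.fv = {x0}

/-- Generalized Sahlqvist antecedents: built from regular box-formulas and negative
formulas using only `∧`, `∨`, `◇_λ`. -/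
inductive GSAnt {Λ : Type u} : MF Λ (ℕ × ℕ) → Prop
  | reg {φ p} : RegBF Prod.fst φ p → GSAnt φ
  | neg {φ} : Positive φ → GSAnt (.neg φ)
  | and {a b} : GSAnt a → GSAnt b → GSAnt (.and a b)
  | or {a b} : GSAnt a → GSAnt b → GSAnt (.or a b)
  | dia (l) {a} : GSAnt a → GSAnt (.dia l a)

/-- Generalized Sahlqvist formulas: built from generalized Sahlqvist implications
`GSA → ⊥` by applying boxes and conjunctions, and disjunctions only to formulas without
common propositional variables. -/
inductive GSF {Λ : Type u} : MF Λ (ℕ × ℕ) → Prop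
  | impl {a} : GSAnt a → GSF (.imp a .bot)
  | box (l) {a} : GSF a → GSF (.box l a)
  | and {a b} : GSF a → GSF b → GSF (.and a b)
  | or {a b} : GSF a → GSF b → MF.vars a ∩ MF.vars b = ∅ → GSF (.or a b)

open Classical in
/-- The modal translation `E^T` of a quasi-safe expression: safe subexpressions are
replaced by their associated propositional variables `p_E`, and `∩, ∪, R^{-1}_λ, R^□_λ`
become `∧, ∨, ◇_λ, □_λ`. -/
noncomputable def Etrans {Λ : Type u} (pE : LExp Λ → ℕ × ℕ) : LExp Λ → MF Λ (ℕ × ℕ)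
  | .var i => .var (pE (.var i))
  | .top => .top
  | .bot => .bot
  | .inter a b =>
      if Safe (LExp.inter a b) then .var (pE (.inter a b))
      else .and (Etrans pE a) (Etrans pE b)
  | .union a b =>
      if Safe (LExp.union a b) then .var (pE (.union a b))
      else .or (Etrans pE a) (Etrans pE b)
  | .rinv l a =>
      if Safe (LExp.rinv l a) then .var (pE (.rinv l a)) else .dia l (Etrans pE a)
  | .rbox l a =>
      if Safe (LExp.rbox l a) then .var (pE (.rbox l a)) else .box l (Etrans pE a)
  | .rfw l a => if Safe (LExp.rfw l a) then .var (pE (.rfw l a)) else .bot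

/-- A finite disjunction of modal formulas (empty disjunction is `⊥`). -/
def orList {Λ : Type u} {V : Type v} : List (MF Λ V) → MF Λ V
  | [] => .bot
  | a :: as => .or a (orList as)

/-! ### Auxiliary development for Statement 19 -/

section Aux19

variable {Λ : Type u}

/- Basic simp lemmas for `sat`. -/
@[simp] lemma sat_var (F : Frame Λ) (θ : V → Set F.W) (x : F.W) (p : V) :
    sat F θ x (.var p) ↔ x ∈ θ p := Iff.rfl
@[simp] lemma sat_top (F : Frame Λ) (θ : V → Set F.W) (x : F.W) :
    sat F θ x (.top : MF Λ V) ↔ True := Iff.rfl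
@[simp] lemma sat_bot (F : Frame Λ) (θ : V → Set F.W) (x : F.W) :
    sat F θ x (.bot : MF Λ V) ↔ False := Iff.rfl
@[simp] lemma sat_and (F : Frame Λ) (θ : V → Set F.W) (x : F.W) (a b : MF Λ V) :
    sat F θ x (.and a b) ↔ sat F θ x a ∧ sat F θ x b := Iff.rfl
@[simp] lemma sat_or (F : Frame Λ) (θ : V → Set F.W) (x : F.W) (a b : MF Λ V) :
    sat F θ x (.or a b) ↔ sat F θ x a ∨ sat F θ x b := Iff.rfl
@[simp] lemma sat_neg (F : Frame Λ) (θ : V → Set F.W) (x : F.W) (a : MF Λ V) :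
    sat F θ x (.neg a) ↔ ¬ sat F θ x a := Iff.rfl
@[simp] lemma sat_imp (F : Frame Λ) (θ : V → Set F.W) (x : F.W) (a b : MF Λ V) :
    sat F θ x (.imp a b) ↔ (sat F θ x a → sat F θ x b) := Iff.rfl
@[simp] lemma sat_dia (F : Frame Λ) (θ : V → Set F.W) (x : F.W) (l : Λ) (a : MF Λ V) :
    sat F θ x (.dia l a) ↔ ∃ y, F.R l x y ∧ sat F θ y a := Iff.rfl
@[simp] lemma sat_box (F : Frame Λ) (θ : V → Set F.W) (x : F.W) (l : Λ) (a : MF Λ V) :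
    sat F θ x (.box l a) ↔ ∀ y, F.R l x y → sat F θ y a := Iff.rfl

/-- Satisfaction only depends on the valuation of the variables occurring in the formula. -/
lemma sat_congr {V : Type v} (F : Frame Λ) {θ θ' : V → Set F.W} (ψ : MF Λ V)
    (h : ∀ q ∈ MF.vars ψ, θ q = θ' q) : ∀ x, sat F θ x ψ ↔ sat F θ' x ψ := by
  induction ψ with
  | var p => intro x; simp [h p (by simp [MF.vars])]
  | top => simp
  | bot => simp
  | and a b iha ihb =>
      intro x
      simp only [sat_and]
      rw [iha (fun q hq => h q (Or.inl hq)), ihb (fun q hq => h q (Or.inr hq))]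
  | or a b iha ihb =>
      intro x
      simp only [sat_or]
      rw [iha (fun q hq => h q (Or.inl hq)), ihb (fun q hq => h q (Or.inr hq))]
  | neg a iha => intro x; simp only [sat_neg]; rw [iha h]
  | imp a b iha ihb =>
      intro x
      simp only [sat_imp]
      rw [iha (fun q hq => h q (Or.inl hq)), ihb (fun q hq => h q (Or.inr hq))]
  | dia l a iha =>
      intro x
      simp only [sat_dia]
      exact exists_congr fun y => and_congr_right fun _ => iha h y
  | box l a iha =>
      intro x
      simp only [sat_box]
      exact forall_congr' fun y => imp_congr_right fun _ => iha h y

/-- Clauses: negated atoms combined with conjunction and restricted existential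
quantification.  These are the constituents of the negation normal form of a `NoEx`
restrictedly positive formula. -/
inductive Cl (Λ : Type u) : Type u
  | natom : ℕ → LExp Λ → Cl Λ
  | and : Cl Λ → Cl Λ → Cl Λ
  | ex : ℕ → Λ → ℕ → Cl Λ → Cl Λ

namespace Cl

/-- Truth of a clause. -/
def holds (F : Frame Λ) : (ℕ → F.W) → Cl Λ → Prop
  | g, natom y E => g y ∉ E.den F g
  | g, and a b => holds F g a ∧ holds F g b
  | g, ex y l x c => ∃ w, F.R l (g x) w ∧ holds F (Function.update g y w) c

/-- Free variables of a clause. -/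
def fv : Cl Λ → Set ℕ
  | natom y E => insert y E.evars
  | and a b => fv a ∪ fv b
  | ex y _ x c => insert x (fv c \ {y})

/-- All atoms of the clause are quasi-safe. -/
def QS : Cl Λ → Prop
  | natom _ E => QuasiSafe E
  | and a b => QS a ∧ QS b
  | ex _ _ _ c => QS c

end Cl

/-- Negation-normal-form lemma: a `NoEx` formula is equivalent to the conjunction of the
negations of a finite list of clauses. -/
theorem nf_exists (α : KrF Λ) (h₁ : α.NoEx) (h₂ : α.AtomsAll QuasiSafe) :
    ∃ L : List (Cl Λ),
      (∀ c ∈ L, Cl.QS c ∧ Cl.fv c ⊆ KrF.fv α) ∧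
      ∀ (F : Frame Λ) (g : ℕ → F.W), KrF.holds F g α ↔ ∀ c ∈ L, ¬ Cl.holds F g c := by
  induction α with
  | atom y E =>
      refine ⟨[.natom y E], ?_, ?_⟩
      · rintro c hc
        simp only [List.mem_singleton] at hc
        subst hc
        exact ⟨h₂, by simp [Cl.fv, KrF.fv]⟩
      · intro F g
        simp [KrF.holds, Cl.holds]
  | and a b iha ihb =>
      obtain ⟨La, hLa, ha⟩ := iha h₁.1 h₂.1
      obtain ⟨Lb, hLb, hb⟩ := ihb h₁.2 h₂.2
      refine ⟨La ++ Lb, ?_, ?_⟩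
      · intro c hc
        rcases List.mem_append.mp hc with h | h
        · exact ⟨(hLa c h).1, (hLa c h).2.trans (by intro z hz; exact Or.inl hz)⟩
        · exact ⟨(hLb c h).1, (hLb c h).2.trans (by intro z hz; exact Or.inr hz)⟩
      · intro F g
        constructor
        · rintro ⟨h1, h2⟩ c hc
          rcases List.mem_append.mp hc with h | h
          · exact (ha F g).mp h1 c h
          · exact (hb F g).mp h2 c h
        · intro h
          exact ⟨(ha F g).mpr fun c hc => h c (List.mem_append.mpr (Or.inl hc)),
                 (hb F g).mpr fun c hc => h c (List.mem_append.mpr (Or.inr hc))⟩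
  | or a b iha ihb =>
      obtain ⟨La, hLa, ha⟩ := iha h₁.1 h₂.1
      obtain ⟨Lb, hLb, hb⟩ := ihb h₁.2 h₂.2
      refine ⟨La.flatMap fun c₁ => Lb.map (Cl.and c₁), ?_, ?_⟩
      · intro c hc
        simp only [List.mem_flatMap, List.mem_map] at hc
        obtain ⟨c₁, hc₁, c₂, hc₂, rfl⟩ := hc
        constructor
        · exact ⟨(hLa c₁ hc₁).1, (hLb c₂ hc₂).1⟩
        · intro z hz
          rcases hz with h | h
          · exact Or.inl ((hLa c₁ hc₁).2 h)
          · exact Or.inr ((hLb c₂ hc₂).2 h)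
      · intro F g
        constructor
        · intro h c hc
          simp only [List.mem_flatMap, List.mem_map] at hc
          obtain ⟨c₁, hc₁, c₂, hc₂, rfl⟩ := hc
          rintro ⟨k₁, k₂⟩
          rcases h with h | h
          · exact (ha F g).mp h c₁ hc₁ k₁
          · exact (hb F g).mp h c₂ hc₂ k₂
        · intro h
          by_contra hcon
          simp only [KrF.holds] at hcon
          push_neg at hcon
          obtain ⟨hna, hnb⟩ := hcon
          have h1 : ¬ ∀ c ∈ La, ¬ Cl.holds F g c := fun hh => hna ((ha F g).mpr hh)
          have h2 : ¬ ∀ c ∈ Lb, ¬ Cl.holds F g c := fun hh => hnb ((hb F g).mpr hh)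
          push_neg at h1 h2
          obtain ⟨c₁, hc₁, k₁⟩ := h1
          obtain ⟨c₂, hc₂, k₂⟩ := h2
          exact h (Cl.and c₁ c₂)
            (List.mem_flatMap.mpr ⟨c₁, hc₁, List.mem_map.mpr ⟨c₂, hc₂, rfl⟩⟩) ⟨k₁, k₂⟩
  | all y l x β ihβ =>
      obtain ⟨L, hL, hβ⟩ := ihβ h₁ h₂
      refine ⟨L.map (Cl.ex y l x), ?_, ?_⟩
      · intro c hc
        simp only [List.mem_map] at hc
        obtain ⟨c', hc', rfl⟩ := hc
        refine ⟨(hL c' hc').1, ?_⟩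
        intro z hz
        rcases hz with rfl | ⟨hz1, hz2⟩
        · exact Set.mem_insert _ _
        · exact Set.mem_insert_iff.mpr (Or.inr ⟨(hL c' hc').2 hz1, hz2⟩)
      · intro F g
        constructor
        · intro h c hc
          simp only [List.mem_map] at hc
          obtain ⟨c', hc', rfl⟩ := hc
          rintro ⟨v, hv, hold⟩
          exact (hβ F (Function.update g y v)).mp (h v hv) c' hc' hold
        · intro h v hv
          refine (hβ F (Function.update g y v)).mpr fun c' hc' hold => ?_
          exact h (Cl.ex y l x c') (List.mem_map.mpr ⟨c', hc', rfl⟩) ⟨v, hv, hold⟩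
  | ex y l x β ihβ => exact absurd h₁ (by simp [KrF.NoEx])

/-- Size of an `L`-expression. -/
def sizeL : LExp Λ → ℕ
  | .var _ => 1
  | .top => 1
  | .bot => 1
  | .inter a b => sizeL a + sizeL b + 1
  | .union a b => sizeL a + sizeL b + 1
  | .rinv _ a => sizeL a + 1
  | .rbox _ a => sizeL a + 1
  | .rfw _ a => sizeL a + 1

lemma sizeL_pos (e : LExp Λ) : 0 < sizeL e := by
  cases e <;> simp [sizeL]

/-- Decidable check for `SafeFor`. -/
def isSafeFor : LExp Λ → Bool
  | .var _ => true
  | .rfw _ a => isSafeFor a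
  | .inter a b => isSafeFor a || isSafeFor b
  | _ => false

lemma isSafeFor_iff (e : LExp Λ) : isSafeFor e = true ↔ SafeFor e := by
  induction e with
  | var i => simp [isSafeFor]; exact .var i
  | top => simp [isSafeFor]; intro h; cases h
  | bot => simp [isSafeFor]; intro h; cases h
  | inter a b iha ihb =>
      simp only [isSafeFor, Bool.or_eq_true, iha, ihb]
      constructor
      · rintro (h | h); exacts [.interL h, .interR h]
      · rintro (_ | _ | h | h); exacts [Or.inl h, Or.inr h]
  | union a b iha ihb => simp [isSafeFor]; intro h; cases h
  | rinv l a ih => simp [isSafeFor]; intro h; cases h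
  | rbox l a ih => simp [isSafeFor]; intro h; cases h
  | rfw l a ih =>
      simp only [isSafeFor, ih]
      constructor
      · exact .rfw l
      · rintro (_ | h); assumption
/-- Hereditary safety: the argument of every `R_λ(·)` subexpression is `SafeFor`. -/
def HS (e : LExp Λ) : Prop := ∀ l a, Subexp (.rfw l a) e → SafeFor a

lemma HS_of_safe {e : LExp Λ} (h : Safe e) : HS e := h.2

lemma QuasiSafe.hs {e : LExp Λ} (h : QuasiSafe e) : HS e := by
  induction h with
  | safe h => exact HS_of_safe h
  | top => intro l a h; cases h
  | bot => intro l a h; cases h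
  | inter ha hb iha ihb =>
      intro l a h
      cases h with
      | interL h => exact iha l a h
      | interR h => exact ihb l a h
  | union ha hb iha ihb =>
      intro l a h
      cases h with
      | unionL h => exact iha l a h
      | unionR h => exact ihb l a h
  | rinv l' ha iha =>
      intro l a h
      cases h with
      | rinv _ h => exact iha l a h
  | rbox l' ha iha =>
      intro l a h
      cases h with
      | rbox _ h => exact iha l a h

lemma HS.interL {a b : LExp Λ} (h : HS (.inter a b)) : HS a :=
  fun l x hx => h l x (.interL hx)
lemma HS.interR {a b : LExp Λ} (h : HS (.inter a b)) : HS b :=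
  fun l x hx => h l x (.interR hx)
lemma HS.unionL {a b : LExp Λ} (h : HS (.union a b)) : HS a :=
  fun l x hx => h l x (.unionL hx)
lemma HS.unionR {a b : LExp Λ} (h : HS (.union a b)) : HS b :=
  fun l x hx => h l x (.unionR hx)
lemma HS.rinv {l : Λ} {a : LExp Λ} (h : HS (.rinv l a)) : HS a :=
  fun l' x hx => h l' x (.rinv l hx)
lemma HS.rbox {l : Λ} {a : LExp Λ} (h : HS (.rbox l a)) : HS a :=
  fun l' x hx => h l' x (.rbox l hx)
lemma HS.rfw {l : Λ} {a : LExp Λ} (h : HS (.rfw l a)) : HS a :=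
  fun l' x hx => h l' x (.rfw l hx)
lemma HS.rfw_safe {l : Λ} {a : LExp Λ} (h : HS (.rfw l a)) : SafeFor a :=
  h l a (.refl _)

/-- The trivial (always true) commitment. -/
def trivC : MF Λ (ℕ × ℕ) := .neg .bot

/-- The trivial commitment map. -/
def dfltC : ℕ → MF Λ (ℕ × ℕ) := fun _ => trivC

/-- Pointwise conjunction of commitment maps. -/
def mergeC (C₁ C₂ : ℕ → MF Λ (ℕ × ℕ)) : ℕ → MF Λ (ℕ × ℕ) :=
  fun z => .and (C₁ z) (C₂ z)

/-- Place a single commitment at a node. -/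
def oneC (i : ℕ) (ψ : MF Λ (ℕ × ℕ)) : ℕ → MF Λ (ℕ × ℕ) :=
  fun z => if z = i then ψ else trivC


@[simp] lemma sat_trivC (F : Frame Λ) (θ : ℕ × ℕ → Set F.W) (u : F.W) :
    sat F θ u (trivC : MF Λ (ℕ × ℕ)) := by simp [trivC]

@[simp] lemma vars_trivC : MF.vars (trivC : MF Λ (ℕ × ℕ)) = ∅ := by
  simp [trivC, MF.vars]

lemma gsant_trivC : GSAnt (trivC : MF Λ (ℕ × ℕ)) := GSAnt.neg Positive.bot

@[simp] lemma vars_mergeC (C₁ C₂ : ℕ → MF Λ (ℕ × ℕ)) (z : ℕ) :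
    MF.vars (mergeC C₁ C₂ z) = MF.vars (C₁ z) ∪ MF.vars (C₂ z) := rfl

@[simp] lemma sat_mergeC (F : Frame Λ) (θ : ℕ × ℕ → Set F.W) (u : F.W)
    (C₁ C₂ : ℕ → MF Λ (ℕ × ℕ)) (z : ℕ) :
    sat F θ u (mergeC C₁ C₂ z) ↔ sat F θ u (C₁ z) ∧ sat F θ u (C₂ z) := Iff.rfl

lemma gsant_mergeC {C₁ C₂ : ℕ → MF Λ (ℕ × ℕ)} (h₁ : ∀ z, GSAnt (C₁ z))
    (h₂ : ∀ z, GSAnt (C₂ z)) : ∀ z, GSAnt (mergeC C₁ C₂ z) :=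
  fun z => GSAnt.and (h₁ z) (h₂ z)

lemma sat_congr_mp {F : Frame Λ} {θ θ' : ℕ × ℕ → Set F.W} {ψ : MF Λ (ℕ × ℕ)}
    (h : ∀ q ∈ MF.vars ψ, θ q = θ' q) {x : F.W} (hx : sat F θ x ψ) : sat F θ' x ψ :=
  (sat_congr F ψ h x).mp hx

mutual
/-- Translation of a (quasi-safe) `L`-expression into a positive modal formula together with
the commitments forcing the minimal valuations of the introduced variables, and the updated
variable counter. -/
def EtB : LExp Λ → ℕ → MF Λ (ℕ × ℕ) × (ℕ → MF Λ (ℕ × ℕ)) × ℕ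
  | .var i, n => (.var (sizeL (LExp.var i : LExp Λ), n), oneC i (.var (sizeL (LExp.var i : LExp Λ), n)), n + 1)
  | .top, _n => (.top, dfltC, _n)
  | .bot, _n => (.bot, dfltC, _n)
  | .inter a b, n =>
      (.and (EtB a n).1 (EtB b (EtB a n).2.2).1,
       mergeC (EtB a n).2.1 (EtB b (EtB a n).2.2).2.1,
       (EtB b (EtB a n).2.2).2.2)
  | .union a b, n =>
      (.or (EtB a n).1 (EtB b (EtB a n).2.2).1,
       mergeC (EtB a n).2.1 (EtB b (EtB a n).2.2).2.1,
       (EtB b (EtB a n).2.2).2.2)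
  | .rinv l a, n => (.dia l (EtB a n).1, (EtB a n).2.1, (EtB a n).2.2)
  | .rbox l a, n => (.box l (EtB a n).1, (EtB a n).2.1, (EtB a n).2.2)
  | .rfw l a, n =>
      (.var (sizeL (LExp.rfw l a), n),
       (spineC a (.box l (.var (sizeL (LExp.rfw l a), n))) (n + 1)).1,
       (spineC a (.box l (.var (sizeL (LExp.rfw l a), n))) (n + 1)).2)
termination_by e _ => sizeL e
decreasing_by all_goals simp [sizeL] <;> omega

/-- Commitments along the safe spine of a safe expression: places, at the bottom variable of
the spine, a regular box-formula ensuring that every point in the denotation of the spine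
satisfies the continuation `cont`. -/
def spineC : LExp Λ → MF Λ (ℕ × ℕ) → ℕ → (ℕ → MF Λ (ℕ × ℕ)) × ℕ
  | .var i, cont, n => (oneC i cont, n)
  | .rfw l a, cont, n => spineC a (.box l cont) n
  | .inter a b, cont, n =>
      if isSafeFor a then
        (mergeC (EtB b n).2.1
           (spineC a (.imp (EtB b n).1 cont) (EtB b n).2.2).1,
         (spineC a (.imp (EtB b n).1 cont) (EtB b n).2.2).2)
      else
        (mergeC (EtB a n).2.1
           (spineC b (.imp (EtB a n).1 cont) (EtB a n).2.2).1,
         (spineC b (.imp (EtB a n).1 cont) (EtB a n).2.2).2)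
  | _, _, n => (dfltC, n)
termination_by e _ _ => sizeL e
decreasing_by all_goals simp [sizeL] <;> omega
end

/-- The specification of `EtB e n = (T, C, n')`. -/
structure EtSpec (e : LExp Λ) (T : MF Λ (ℕ × ℕ)) (C : ℕ → MF Λ (ℕ × ℕ))
    (n n' : ℕ) : Prop where
  mono : n ≤ n'
  pos : Positive T
  varsT : ∀ q ∈ MF.vars T, (n ≤ q.2 ∧ q.2 < n') ∧ q.1 ≤ sizeL e
  varsC : ∀ z, ∀ q ∈ MF.vars (C z), n ≤ q.2 ∧ q.2 < n'
  gsa : ∀ z, GSAnt (C z)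
  triv : ∀ z ∉ LExp.evars e, ∀ (F : Frame.{u, w} Λ) (θ : ℕ × ℕ → Set F.W) (u : F.W),
    sat F θ u (C z)
  sound : ∀ (F : Frame.{u, w} Λ) (g : ℕ → F.W) (θ : ℕ × ℕ → Set F.W),
    (∀ z, sat F θ (g z) (C z)) → ∀ u ∈ LExp.den F g e, sat F θ u T
  compl : ∀ (F : Frame.{u, w} Λ) (g : ℕ → F.W) (θ₀ : ℕ × ℕ → Set F.W),
    ∃ θ : ℕ × ℕ → Set F.W, (∀ q : ℕ × ℕ, q.2 < n ∨ n' ≤ q.2 → θ q = θ₀ q) ∧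
      (∀ z, sat F θ (g z) (C z)) ∧ ∀ u, sat F θ u T → u ∈ LExp.den F g e

/-- The specification of `spineC e cont n = (C, n')`. -/
structure SpSpec (e : LExp Λ) (cont : MF Λ (ℕ × ℕ)) (C : ℕ → MF Λ (ℕ × ℕ))
    (n n' : ℕ) : Prop where
  mono : n ≤ n'
  varsC : ∀ z, ∀ q ∈ MF.vars (C z), (n ≤ q.2 ∧ q.2 < n') ∨ q ∈ MF.vars cont
  gsa : ∀ p : ℕ × ℕ, RegBF Prod.fst cont p → sizeL e ≤ p.1 → ∀ z, GSAnt (C z)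
  triv : ∀ z ∉ LExp.evars e, ∀ (F : Frame.{u, w} Λ) (θ : ℕ × ℕ → Set F.W) (u : F.W),
    sat F θ u (C z)
  sound : ∀ (F : Frame.{u, w} Λ) (g : ℕ → F.W) (θ : ℕ × ℕ → Set F.W),
    (∀ z, sat F θ (g z) (C z)) → ∀ u ∈ LExp.den F g e, sat F θ u cont
  compl : ∀ (F : Frame.{u, w} Λ) (g : ℕ → F.W) (θ₀ : ℕ × ℕ → Set F.W),
    (∀ q ∈ MF.vars cont, q.2 < n) →
    (∀ u ∈ LExp.den F g e, sat F θ₀ u cont) →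
    ∃ θ : ℕ × ℕ → Set F.W, (∀ q : ℕ × ℕ, q.2 < n ∨ n' ≤ q.2 → θ q = θ₀ q) ∧
      ∀ z, sat F θ (g z) (C z)

theorem EtB_spineC_spec :
    ∀ k : ℕ,
      (∀ e : LExp Λ, sizeL e ≤ k → HS e → ∀ n,
        EtSpec.{u, w} e (EtB e n).1 (EtB e n).2.1 n (EtB e n).2.2) ∧
      (∀ e : LExp Λ, sizeL e ≤ k → SafeFor e → HS e → ∀ cont n,
        SpSpec.{u, w} e cont (spineC e cont n).1 n (spineC e cont n).2) := by
  intro k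
  induction k with
  | zero =>
      constructor
      · intro e he; exact absurd (sizeL_pos e) (by omega)
      · intro e he; exact absurd (sizeL_pos e) (by omega)
  | succ k ih =>
      obtain ⟨ihE, ihS⟩ := ih
      constructor
      · -- `EtB` part
        intro e he hhs n
        cases e with
        | var i =>
            rw [EtB]
            refine ⟨Nat.le_succ n, Positive.var _, ?_, ?_, ?_, ?_, ?_, ?_⟩
            · intro q hq
              simp only [MF.vars, Set.mem_singleton_iff] at hq
              subst hq
              exact ⟨⟨le_refl n, Nat.lt_succ_self n⟩, le_refl _⟩
            · intro z q hq
              simp only [oneC] at hq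
              split at hq
              · simp only [MF.vars, Set.mem_singleton_iff] at hq
                subst hq
                exact ⟨le_refl n, Nat.lt_succ_self n⟩
              · simp at hq
            · intro z
              simp only [oneC]
              split
              · exact GSAnt.reg (RegBF.var _)
              · exact gsant_trivC
            · intro z hz F θ u
              simp only [LExp.evars, Set.mem_singleton_iff] at hz
              simp only [oneC, if_neg hz]
              exact sat_trivC _ _ _
            · intro F g θ hC u hu
              simp only [LExp.den, Set.mem_singleton_iff] at hu
              subst hu
              have := hC i
              simp only [oneC, if_pos rfl] at this
              exact this
            · intro F g θ₀
              refine ⟨Function.update θ₀ (sizeL (LExp.var i : LExp Λ), n) {g i}, ?_, ?_, ?_⟩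
              · intro q hq
                have hne : q ≠ (sizeL (LExp.var i : LExp Λ), n) := by
                  rintro rfl; simp only at hq; omega
                exact Function.update_of_ne hne _ _
              · intro z
                simp only [oneC]
                split
                · rename_i hz
                  subst hz
                  simp only [sat_var, Function.update_self]
                  exact rfl
                · exact sat_trivC _ _ _
              · intro u hu
                simp only [sat_var, Function.update_self] at hu
                simpa [LExp.den] using hu
        | top =>
            rw [EtB]
            refine ⟨le_refl n, Positive.top, ?_, ?_, ?_, ?_, ?_, ?_⟩
            · intro q hq; simp [MF.vars] at hq
            · intro z q hq; simp [dfltC] at hq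
            · intro z; exact gsant_trivC
            · intro z _ F θ u; exact sat_trivC _ _ _
            · intro F g θ _ u _; trivial
            · intro F g θ₀
              exact ⟨θ₀, fun q _ => rfl, fun z => sat_trivC _ _ _,
                fun u _ => Set.mem_univ u⟩
        | bot =>
            rw [EtB]
            refine ⟨le_refl n, Positive.bot, ?_, ?_, ?_, ?_, ?_, ?_⟩
            · intro q hq; simp [MF.vars] at hq
            · intro z q hq; simp [dfltC] at hq
            · intro z; exact gsant_trivC
            · intro z _ F θ u; exact sat_trivC _ _ _
            · intro F g θ _ u hu; simp [LExp.den] at hu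
            · intro F g θ₀
              exact ⟨θ₀, fun q _ => rfl, fun z => sat_trivC _ _ _, fun u hu => hu.elim⟩
        | inter a b =>
            have hsa : sizeL a ≤ k := by
              have ha := sizeL_pos a; have hb := sizeL_pos b
              simp only [sizeL] at he; omega
            have hsb : sizeL b ≤ k := by
              have ha := sizeL_pos a; have hb := sizeL_pos b
              simp only [sizeL] at he; omega
            have Sa := ihE a hsa hhs.interL n
            have Sb := ihE b hsb hhs.interR (EtB a n).2.2
            rw [EtB]
            refine ⟨Sa.mono.trans Sb.mono, Positive.and Sa.pos Sb.pos, ?_, ?_, ?_, ?_, ?_, ?_⟩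
            · intro q hq
              simp only [MF.vars, Set.mem_union] at hq
              rcases hq with h | h
              · obtain ⟨⟨h1, h2⟩, h3⟩ := Sa.varsT q h
                exact ⟨⟨h1, lt_of_lt_of_le h2 Sb.mono⟩,
                  h3.trans (by simp [sizeL]; omega)⟩
              · obtain ⟨⟨h1, h2⟩, h3⟩ := Sb.varsT q h
                exact ⟨⟨Sa.mono.trans h1, h2⟩, h3.trans (by simp [sizeL]; omega)⟩
            · intro z q hq
              rw [vars_mergeC] at hq
              rcases hq with h | h
              · obtain ⟨h1, h2⟩ := Sa.varsC z q h
                exact ⟨h1, lt_of_lt_of_le h2 Sb.mono⟩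
              · obtain ⟨h1, h2⟩ := Sb.varsC z q h
                exact ⟨Sa.mono.trans h1, h2⟩
            · exact gsant_mergeC Sa.gsa Sb.gsa
            · intro z hz F θ u
              simp only [LExp.evars, Set.mem_union] at hz
              push_neg at hz
              exact ⟨Sa.triv z hz.1 F θ u, Sb.triv z hz.2 F θ u⟩
            · intro F g θ hC u hu
              simp only [LExp.den, Set.mem_inter_iff] at hu
              exact ⟨Sa.sound F g θ (fun z => (hC z).1) u hu.1,
                     Sb.sound F g θ (fun z => (hC z).2) u hu.2⟩
            · intro F g θ₀
              obtain ⟨θ₁, hext₁, hsat₁, hT₁⟩ := Sa.compl F g θ₀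
              obtain ⟨θ₂, hext₂, hsat₂, hT₂⟩ := Sb.compl F g θ₁
              refine ⟨θ₂, ?_, ?_, ?_⟩
              · intro q hq
                have hq' : q.2 < n ∨ (EtB b (EtB a n).2.2).2.2 ≤ q.2 := hq
                rw [hext₂ q (hq'.elim
                    (fun h => Or.inl (lt_of_lt_of_le h Sa.mono)) Or.inr)]
                exact hext₁ q (hq'.elim Or.inl fun h => Or.inr (Sb.mono.trans h))
              · intro z
                refine ⟨?_, hsat₂ z⟩
                exact sat_congr_mp
                  (fun q hq => (hext₂ q (Or.inl (Sa.varsC z q hq).2)).symm) (hsat₁ z)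
              · intro u hu
                obtain ⟨h1, h2⟩ := hu
                simp only [LExp.den, Set.mem_inter_iff]
                refine ⟨hT₁ u ?_, hT₂ u h2⟩
                exact sat_congr_mp
                  (fun q hq => hext₂ q (Or.inl (Sa.varsT q hq).1.2)) h1
        | union a b =>
            have hsa : sizeL a ≤ k := by
              have ha := sizeL_pos a; have hb := sizeL_pos b
              simp only [sizeL] at he; omega
            have hsb : sizeL b ≤ k := by
              have ha := sizeL_pos a; have hb := sizeL_pos b
              simp only [sizeL] at he; omega
            have Sa := ihE a hsa hhs.unionL n
            have Sb := ihE b hsb hhs.unionR (EtB a n).2.2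
            rw [EtB]
            refine ⟨Sa.mono.trans Sb.mono, Positive.or Sa.pos Sb.pos, ?_, ?_, ?_, ?_, ?_, ?_⟩
            · intro q hq
              simp only [MF.vars, Set.mem_union] at hq
              rcases hq with h | h
              · obtain ⟨⟨h1, h2⟩, h3⟩ := Sa.varsT q h
                exact ⟨⟨h1, lt_of_lt_of_le h2 Sb.mono⟩,
                  h3.trans (by simp [sizeL]; omega)⟩
              · obtain ⟨⟨h1, h2⟩, h3⟩ := Sb.varsT q h
                exact ⟨⟨Sa.mono.trans h1, h2⟩, h3.trans (by simp [sizeL]; omega)⟩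
            · intro z q hq
              rw [vars_mergeC] at hq
              rcases hq with h | h
              · obtain ⟨h1, h2⟩ := Sa.varsC z q h
                exact ⟨h1, lt_of_lt_of_le h2 Sb.mono⟩
              · obtain ⟨h1, h2⟩ := Sb.varsC z q h
                exact ⟨Sa.mono.trans h1, h2⟩
            · exact gsant_mergeC Sa.gsa Sb.gsa
            · intro z hz F θ u
              simp only [LExp.evars, Set.mem_union] at hz
              push_neg at hz
              exact ⟨Sa.triv z hz.1 F θ u, Sb.triv z hz.2 F θ u⟩
            · intro F g θ hC u hu
              simp only [LExp.den, Set.mem_union] at hu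
              rcases hu with h | h
              · exact Or.inl (Sa.sound F g θ (fun z => (hC z).1) u h)
              · exact Or.inr (Sb.sound F g θ (fun z => (hC z).2) u h)
            · intro F g θ₀
              obtain ⟨θ₁, hext₁, hsat₁, hT₁⟩ := Sa.compl F g θ₀
              obtain ⟨θ₂, hext₂, hsat₂, hT₂⟩ := Sb.compl F g θ₁
              refine ⟨θ₂, ?_, ?_, ?_⟩
              · intro q hq
                have hq' : q.2 < n ∨ (EtB b (EtB a n).2.2).2.2 ≤ q.2 := hq
                rw [hext₂ q (hq'.elim
                    (fun h => Or.inl (lt_of_lt_of_le h Sa.mono)) Or.inr)]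
                exact hext₁ q (hq'.elim Or.inl fun h => Or.inr (Sb.mono.trans h))
              · intro z
                refine ⟨?_, hsat₂ z⟩
                exact sat_congr_mp
                  (fun q hq => (hext₂ q (Or.inl (Sa.varsC z q hq).2)).symm) (hsat₁ z)
              · intro u hu
                simp only [LExp.den, Set.mem_union]
                rcases hu with h | h
                · refine Or.inl (hT₁ u ?_)
                  exact sat_congr_mp
                    (fun q hq => hext₂ q (Or.inl (Sa.varsT q hq).1.2)) h
                · exact Or.inr (hT₂ u h)
        | rinv l a =>
            have hsa : sizeL a ≤ k := by simp only [sizeL] at he; omega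
            have Sa := ihE a hsa hhs.rinv n
            rw [EtB]
            refine ⟨Sa.mono, Positive.dia l Sa.pos, ?_, Sa.varsC, Sa.gsa,
              fun z hz => Sa.triv z hz, ?_, ?_⟩
            · intro q hq
              obtain ⟨h1, h2⟩ := Sa.varsT q hq
              exact ⟨h1, h2.trans (by simp [sizeL])⟩
            · intro F g θ hC u hu
              obtain ⟨v, h1, h2⟩ := hu
              exact ⟨v, h1, Sa.sound F g θ hC v h2⟩
            · intro F g θ₀
              obtain ⟨θ, hext, hsat, hT⟩ := Sa.compl F g θ₀
              refine ⟨θ, hext, hsat, ?_⟩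
              intro u hu
              obtain ⟨v, h1, h2⟩ := hu
              exact ⟨v, h1, hT v h2⟩
        | rbox l a =>
            have hsa : sizeL a ≤ k := by simp only [sizeL] at he; omega
            have Sa := ihE a hsa hhs.rbox n
            rw [EtB]
            refine ⟨Sa.mono, Positive.box l Sa.pos, ?_, Sa.varsC, Sa.gsa,
              fun z hz => Sa.triv z hz, ?_, ?_⟩
            · intro q hq
              obtain ⟨h1, h2⟩ := Sa.varsT q hq
              exact ⟨h1, h2.trans (by simp [sizeL])⟩
            · intro F g θ hC u hu
              intro v hv
              exact Sa.sound F g θ hC v (hu v hv)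
            · intro F g θ₀
              obtain ⟨θ, hext, hsat, hT⟩ := Sa.compl F g θ₀
              refine ⟨θ, hext, hsat, ?_⟩
              intro u hu v hv
              exact hT v (hu v hv)
        | rfw l a =>
            have hsa : sizeL a ≤ k := by simp only [sizeL] at he; omega
            have Sp := ihS a hsa hhs.rfw_safe hhs.rfw
              (.box l (.var (sizeL (LExp.rfw l a), n))) (n + 1)
            rw [EtB]
            refine ⟨(Nat.le_succ n).trans Sp.mono, Positive.var _, ?_, ?_, ?_, ?_, ?_, ?_⟩
            · intro q hq
              simp only [MF.vars, Set.mem_singleton_iff] at hq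
              subst hq
              exact ⟨⟨le_refl n, lt_of_lt_of_le (Nat.lt_succ_self n) Sp.mono⟩, le_refl _⟩
            · intro z q hq
              rcases Sp.varsC z q hq with ⟨h1, h2⟩ | h
              · exact ⟨by omega, h2⟩
              · simp only [MF.vars, Set.mem_singleton_iff] at h
                subst h
                exact ⟨le_refl n, lt_of_lt_of_le (Nat.lt_succ_self n) Sp.mono⟩
            · intro z
              exact Sp.gsa _ (RegBF.box l (RegBF.var _)) (by simp [sizeL]) z
            · intro z hz F θ u
              exact Sp.triv z hz F θ u
            · intro F g θ hC u hu
              obtain ⟨v, h1, h2⟩ := hu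
              exact (Sp.sound F g θ hC v h2) u h1
            · intro F g θ₀
              have hvars : ∀ q ∈ MF.vars
                  (MF.box l (.var (sizeL (LExp.rfw l a), n)) : MF Λ (ℕ × ℕ)),
                  q.2 < n + 1 := by
                intro q hq
                simp only [MF.vars, Set.mem_singleton_iff] at hq
                subst hq
                exact Nat.lt_succ_self n
              have hcont : ∀ u ∈ LExp.den F g a,
                  sat F (Function.update θ₀ (sizeL (LExp.rfw l a), n)
                    (LExp.den F g (.rfw l a))) u
                    (MF.box l (.var (sizeL (LExp.rfw l a), n))) := by
                intro u hu v hv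
                simp only [sat_var, Function.update_self]
                exact ⟨u, hv, hu⟩
              obtain ⟨θ, hext, hsat⟩ := Sp.compl F g _ hvars hcont
              refine ⟨θ, ?_, hsat, ?_⟩
              · intro q hq
                have hne : q ≠ (sizeL (LExp.rfw l a), n) := by
                  rintro rfl
                  simp only at hq
                  have := Sp.mono
                  omega
                have hq' : q.2 < n ∨
                    (spineC a (.box l (.var (sizeL (LExp.rfw l a), n))) (n + 1)).2 ≤ q.2 := hq
                rw [hext q (hq'.elim (fun h => Or.inl (by omega)) Or.inr)]
                exact Function.update_of_ne hne _ _
              · intro u hu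
                simp only [sat_var] at hu
                rw [hext (sizeL (LExp.rfw l a), n) (Or.inl (Nat.lt_succ_self n)),
                  Function.update_self] at hu
                exact hu
      · -- `spineC` part
        intro e he hsf hhs cont n
        cases e with
        | var i =>
            rw [spineC]
            refine ⟨le_refl n, ?_, ?_, ?_, ?_, ?_⟩
            · intro z q hq
              simp only [oneC] at hq
              split at hq
              · exact Or.inr hq
              · simp at hq
            · intro p hp hsz z
              simp only [oneC]
              split
              · exact GSAnt.reg hp
              · exact gsant_trivC
            · intro z hz F θ u
              simp only [LExp.evars, Set.mem_singleton_iff] at hz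
              simp only [oneC, if_neg hz]
              exact sat_trivC _ _ _
            · intro F g θ hC u hu
              simp only [LExp.den, Set.mem_singleton_iff] at hu
              subst hu
              have := hC i
              simp only [oneC, if_pos rfl] at this
              exact this
            · intro F g θ₀ hvc hcont
              refine ⟨θ₀, fun q _ => rfl, ?_⟩
              intro z
              simp only [oneC]
              split
              · rename_i hz
                subst hz
                exact hcont (g _) rfl
              · exact sat_trivC _ _ _
        | top => cases hsf
        | bot => cases hsf
        | union a b => cases hsf
        | rinv l a => cases hsf
        | rbox l a => cases hsf
        | rfw l a =>
            have hsa : sizeL a ≤ k := by simp only [sizeL] at he; omega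
            have hsfa : SafeFor a := by cases hsf with | rfw _ h => exact h
            have Sp := ihS a hsa hsfa hhs.rfw (.box l cont) n
            rw [spineC]
            refine ⟨Sp.mono, ?_, ?_, ?_, ?_, ?_⟩
            · intro z q hq
              rcases Sp.varsC z q hq with h | h
              · exact Or.inl h
              · exact Or.inr h
            · intro p hp hsz z
              exact Sp.gsa p (RegBF.box l hp) (by simp only [sizeL] at hsz; omega) z
            · intro z hz F θ u
              exact Sp.triv z hz F θ u
            · intro F g θ hC u hu
              obtain ⟨v, h1, h2⟩ := hu
              exact (Sp.sound F g θ hC v h2) u h1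
            · intro F g θ₀ hvc hcont
              refine Sp.compl F g θ₀ (fun q hq => hvc q hq) ?_
              intro u hu v hv
              exact hcont v ⟨u, hv, hu⟩
        | inter a b =>
            have hsa' : sizeL a ≤ k := by
              have ha := sizeL_pos a; have hb := sizeL_pos b
              simp only [sizeL] at he; omega
            have hsb' : sizeL b ≤ k := by
              have ha := sizeL_pos a; have hb := sizeL_pos b
              simp only [sizeL] at he; omega
            by_cases hA : isSafeFor a = true
            · have hsa : SafeFor a := (isSafeFor_iff a).mp hA
              have Sb := ihE b hsb' hhs.interR n
              have Sa := ihS a hsa' hsa hhs.interL (.imp (EtB b n).1 cont) (EtB b n).2.2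
              rw [spineC, if_pos hA]
              refine ⟨Sb.mono.trans Sa.mono, ?_, ?_, ?_, ?_, ?_⟩
              · intro z q hq
                rw [vars_mergeC] at hq
                rcases hq with h | h
                · obtain ⟨h1, h2⟩ := Sb.varsC z q h
                  exact Or.inl ⟨h1, lt_of_lt_of_le h2 Sa.mono⟩
                · rcases Sa.varsC z q h with ⟨h1, h2⟩ | h
                  · exact Or.inl ⟨Sb.mono.trans h1, h2⟩
                  · simp only [MF.vars, Set.mem_union] at h
                    rcases h with h | h
                    · obtain ⟨⟨h1, h2⟩, _⟩ := Sb.varsT q h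
                      exact Or.inl ⟨h1, lt_of_lt_of_le h2 Sa.mono⟩
                    · exact Or.inr h
              · intro p hp hsz z
                refine GSAnt.and (Sb.gsa z) (Sa.gsa p ?_ ?_ z)
                · refine RegBF.imp Sb.pos ?_ hp
                  intro q hq
                  have h3 := (Sb.varsT q hq).2
                  simp only [sizeL] at hsz
                  have ha := sizeL_pos a
                  omega
                · simp only [sizeL] at hsz; omega
              · intro z hz F θ u
                simp only [LExp.evars, Set.mem_union] at hz
                push_neg at hz
                exact ⟨Sb.triv z hz.2 F θ u, Sa.triv z hz.1 F θ u⟩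
              · intro F g θ hC u hu
                simp only [LExp.den, Set.mem_inter_iff] at hu
                have h1 := Sa.sound F g θ (fun z => (hC z).2) u hu.1
                exact h1 (Sb.sound F g θ (fun z => (hC z).1) u hu.2)
              · intro F g θ₀ hvc hcont
                obtain ⟨θ₁, hext₁, hsat₁, hT₁⟩ := Sb.compl F g θ₀
                have hvc' : ∀ q ∈ MF.vars (MF.imp (EtB b n).1 cont), q.2 < (EtB b n).2.2 := by
                  intro q hq
                  simp only [MF.vars, Set.mem_union] at hq
                  rcases hq with h | h
                  · exact (Sb.varsT q h).1.2
                  · exact lt_of_lt_of_le (hvc q h) Sb.mono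
                have hcont' : ∀ u ∈ LExp.den F g a,
                    sat F θ₁ u (MF.imp (EtB b n).1 cont) := by
                  intro u hu hTb
                  have hub := hT₁ u hTb
                  have := hcont u ⟨hu, hub⟩
                  exact sat_congr_mp
                    (fun q hq => (hext₁ q (Or.inl (hvc q hq))).symm) this
                obtain ⟨θ₂, hext₂, hsat₂⟩ := Sa.compl F g θ₁ hvc' hcont'
                refine ⟨θ₂, ?_, ?_⟩
                · intro q hq
                  have hq' : q.2 < n ∨
                      (spineC a (.imp (EtB b n).1 cont) (EtB b n).2.2).2 ≤ q.2 := hq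
                  rw [hext₂ q (hq'.elim
                      (fun h => Or.inl (lt_of_lt_of_le h Sb.mono)) Or.inr)]
                  exact hext₁ q (hq'.elim Or.inl fun h => Or.inr (Sa.mono.trans h))
                · intro z
                  refine ⟨?_, hsat₂ z⟩
                  exact sat_congr_mp
                    (fun q hq => (hext₂ q (Or.inl (Sb.varsC z q hq).2)).symm) (hsat₁ z)
            · have hsb : SafeFor b := by
                cases hsf with
                | interL h => exact absurd ((isSafeFor_iff a).mpr h) hA
                | interR h => exact h
              have Sa := ihE a hsa' hhs.interL n
              have Sb := ihS b hsb' hsb hhs.interR (.imp (EtB a n).1 cont) (EtB a n).2.2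
              rw [spineC, if_neg hA]
              refine ⟨Sa.mono.trans Sb.mono, ?_, ?_, ?_, ?_, ?_⟩
              · intro z q hq
                rw [vars_mergeC] at hq
                rcases hq with h | h
                · obtain ⟨h1, h2⟩ := Sa.varsC z q h
                  exact Or.inl ⟨h1, lt_of_lt_of_le h2 Sb.mono⟩
                · rcases Sb.varsC z q h with ⟨h1, h2⟩ | h
                  · exact Or.inl ⟨Sa.mono.trans h1, h2⟩
                  · simp only [MF.vars, Set.mem_union] at h
                    rcases h with h | h
                    · obtain ⟨⟨h1, h2⟩, _⟩ := Sa.varsT q h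
                      exact Or.inl ⟨h1, lt_of_lt_of_le h2 Sb.mono⟩
                    · exact Or.inr h
              · intro p hp hsz z
                refine GSAnt.and (Sa.gsa z) (Sb.gsa p ?_ ?_ z)
                · refine RegBF.imp Sa.pos ?_ hp
                  intro q hq
                  have h3 := (Sa.varsT q hq).2
                  simp only [sizeL] at hsz
                  have hb := sizeL_pos b
                  omega
                · simp only [sizeL] at hsz; omega
              · intro z hz F θ u
                simp only [LExp.evars, Set.mem_union] at hz
                push_neg at hz
                exact ⟨Sa.triv z hz.1 F θ u, Sb.triv z hz.2 F θ u⟩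
              · intro F g θ hC u hu
                simp only [LExp.den, Set.mem_inter_iff] at hu
                have h1 := Sb.sound F g θ (fun z => (hC z).2) u hu.2
                exact h1 (Sa.sound F g θ (fun z => (hC z).1) u hu.1)
              · intro F g θ₀ hvc hcont
                obtain ⟨θ₁, hext₁, hsat₁, hT₁⟩ := Sa.compl F g θ₀
                have hvc' : ∀ q ∈ MF.vars (MF.imp (EtB a n).1 cont), q.2 < (EtB a n).2.2 := by
                  intro q hq
                  simp only [MF.vars, Set.mem_union] at hq
                  rcases hq with h | h
                  · exact (Sa.varsT q h).1.2
                  · exact lt_of_lt_of_le (hvc q h) Sa.mono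
                have hcont' : ∀ u ∈ LExp.den F g b,
                    sat F θ₁ u (MF.imp (EtB a n).1 cont) := by
                  intro u hu hTa
                  have hua := hT₁ u hTa
                  have := hcont u ⟨hua, hu⟩
                  exact sat_congr_mp
                    (fun q hq => (hext₁ q (Or.inl (hvc q hq))).symm) this
                obtain ⟨θ₂, hext₂, hsat₂⟩ := Sb.compl F g θ₁ hvc' hcont'
                refine ⟨θ₂, ?_, ?_⟩
                · intro q hq
                  have hq' : q.2 < n ∨
                      (spineC b (.imp (EtB a n).1 cont) (EtB a n).2.2).2 ≤ q.2 := hq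
                  rw [hext₂ q (hq'.elim
                      (fun h => Or.inl (lt_of_lt_of_le h Sa.mono)) Or.inr)]
                  exact hext₁ q (hq'.elim Or.inl fun h => Or.inr (Sb.mono.trans h))
                · intro z
                  refine ⟨?_, hsat₂ z⟩
                  exact sat_congr_mp
                    (fun q hq => (hext₂ q (Or.inl (Sa.varsC z q hq).2)).symm) (hsat₁ z)

/-- The construction of the antecedent pieces of a clause: `buildA c n = (D, n')` where
`D z` is the modal formula to be placed at the node of the variable `z`. -/
def buildA : Cl Λ → ℕ → (ℕ → MF Λ (ℕ × ℕ)) × ℕ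
  | .natom y E, n =>
      (fun z => if z = y then .and (.neg (EtB E n).1) ((EtB E n).2.1 z) else (EtB E n).2.1 z,
       (EtB E n).2.2)
  | .and c₁ c₂, n =>
      (mergeC (buildA c₁ n).1 (buildA c₂ (buildA c₁ n).2).1, (buildA c₂ (buildA c₁ n).2).2)
  | .ex y l x c, n =>
      (fun z =>
        if z = x then
          .and (.dia l ((buildA c n).1 y)) (if z = y then trivC else (buildA c n).1 z)
        else if z = y then trivC else (buildA c n).1 z,
       (buildA c n).2)

/-- Specification of `buildA c n = (D, n')`. -/
structure BSpec (c : Cl Λ) (D : ℕ → MF Λ (ℕ × ℕ)) (n n' : ℕ) : Prop where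
  mono : n ≤ n'
  varsD : ∀ z, ∀ q ∈ MF.vars (D z), n ≤ q.2 ∧ q.2 < n'
  gsa : ∀ z, GSAnt (D z)
  triv : ∀ z ∉ Cl.fv c, ∀ (F : Frame.{u, w} Λ) (θ : ℕ × ℕ → Set F.W) (u : F.W),
    sat F θ u (D z)
  sound : ∀ (F : Frame.{u, w} Λ) (g : ℕ → F.W) (θ : ℕ × ℕ → Set F.W),
    (∀ z, sat F θ (g z) (D z)) → Cl.holds F g c
  compl : ∀ (F : Frame.{u, w} Λ) (g : ℕ → F.W) (θ₀ : ℕ × ℕ → Set F.W), Cl.holds F g c →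
    ∃ θ : ℕ × ℕ → Set F.W, (∀ q : ℕ × ℕ, q.2 < n ∨ n' ≤ q.2 → θ q = θ₀ q) ∧
      ∀ z, sat F θ (g z) (D z)

theorem buildA_spec : ∀ c : Cl Λ, Cl.QS c → ∀ n,
    BSpec.{u, w} c (buildA c n).1 n (buildA c n).2 := by
  intro c
  induction c with
  | natom y E =>
      intro hqs n
      have SE := (EtB_spineC_spec.{u, w} (sizeL E)).1 E (le_refl _) hqs.hs n
      rw [buildA]
      refine ⟨SE.mono, ?_, ?_, ?_, ?_, ?_⟩
      · intro z q hq
        simp only at hq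
        split at hq
        · simp only [MF.vars, Set.mem_union] at hq
          rcases hq with h | h
          · exact (SE.varsT q h).1
          · exact SE.varsC _ q h
        · exact SE.varsC z q hq
      · intro z
        simp only
        split
        · exact GSAnt.and (GSAnt.neg SE.pos) (SE.gsa _)
        · exact SE.gsa z
      · intro z hz F θ u
        simp only [Cl.fv, Set.mem_insert_iff] at hz
        push_neg at hz
        simp only [if_neg hz.1]
        exact SE.triv z hz.2 F θ u
      · intro F g θ hD
        have hD' : ∀ z, sat F θ (g z)
            (if z = y then MF.and (.neg (EtB E n).1) ((EtB E n).2.1 z)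
             else (EtB E n).2.1 z) := hD
        have hCz : ∀ z, sat F θ (g z) ((EtB E n).2.1 z) := by
          intro z
          have h := hD' z
          by_cases hz : z = y
          · rw [if_pos hz] at h; exact h.2
          · rw [if_neg hz] at h; exact h
        intro hmem
        have h1 := hD' y
        rw [if_pos rfl] at h1
        exact h1.1 (SE.sound F g θ hCz (g y) hmem)
      · intro F g θ₀ hold
        obtain ⟨θ, hext, hsat, hT⟩ := SE.compl F g θ₀
        refine ⟨θ, hext, ?_⟩
        intro z
        show sat F θ (g z)
          (if z = y then MF.and (.neg (EtB E n).1) ((EtB E n).2.1 z)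
           else (EtB E n).2.1 z)
        by_cases hz : z = y
        · rw [if_pos hz]
          exact ⟨fun hs => hold (hz ▸ hT (g z) hs), hsat z⟩
        · rw [if_neg hz]; exact hsat z
  | and c₁ c₂ ih₁ ih₂ =>
      intro hqs n
      have S₁ := ih₁ hqs.1 n
      have S₂ := ih₂ hqs.2 (buildA c₁ n).2
      rw [buildA]
      refine ⟨S₁.mono.trans S₂.mono, ?_, gsant_mergeC S₁.gsa S₂.gsa, ?_, ?_, ?_⟩
      · intro z q hq
        rw [vars_mergeC] at hq
        rcases hq with h | h
        · obtain ⟨h1, h2⟩ := S₁.varsD z q h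
          exact ⟨h1, lt_of_lt_of_le h2 S₂.mono⟩
        · obtain ⟨h1, h2⟩ := S₂.varsD z q h
          exact ⟨S₁.mono.trans h1, h2⟩
      · intro z hz F θ u
        simp only [Cl.fv, Set.mem_union] at hz
        push_neg at hz
        exact ⟨S₁.triv z hz.1 F θ u, S₂.triv z hz.2 F θ u⟩
      · intro F g θ hD
        exact ⟨S₁.sound F g θ (fun z => (hD z).1), S₂.sound F g θ (fun z => (hD z).2)⟩
      · intro F g θ₀ hold
        obtain ⟨θ₁, hext₁, hsat₁⟩ := S₁.compl F g θ₀ hold.1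
        obtain ⟨θ₂, hext₂, hsat₂⟩ := S₂.compl F g θ₁ hold.2
        refine ⟨θ₂, ?_, ?_⟩
        · intro q hq
          have hq' : q.2 < n ∨ (buildA c₂ (buildA c₁ n).2).2 ≤ q.2 := hq
          rw [hext₂ q (hq'.elim (fun h => Or.inl (lt_of_lt_of_le h S₁.mono)) Or.inr)]
          exact hext₁ q (hq'.elim Or.inl fun h => Or.inr (S₂.mono.trans h))
        · intro z
          refine ⟨?_, hsat₂ z⟩
          exact sat_congr_mp
            (fun q hq => (hext₂ q (Or.inl (S₁.varsD z q hq).2)).symm) (hsat₁ z)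
  | ex y l x c ih =>
      intro hqs n
      have S := ih hqs n
      rw [buildA]
      refine ⟨S.mono, ?_, ?_, ?_, ?_, ?_⟩
      · intro z q hq
        simp only at hq
        split at hq
        · simp only [MF.vars, Set.mem_union] at hq
          rcases hq with h | h
          · exact S.varsD y q h
          · split at h
            · simp [trivC, MF.vars] at h
            · exact S.varsD z q h
        · split at hq
          · simp [trivC, MF.vars] at hq
          · exact S.varsD z q hq
      · intro z
        simp only
        split
        · refine GSAnt.and (GSAnt.dia l (S.gsa y)) ?_
          split
          · exact gsant_trivC
          · exact S.gsa z
        · split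
          · exact gsant_trivC
          · exact S.gsa z
      · intro z hz F θ u
        simp only [Cl.fv, Set.mem_insert_iff, Set.mem_diff, Set.mem_singleton_iff] at hz
        push_neg at hz
        show sat F θ u
          (if z = x then
            MF.and (.dia l ((buildA c n).1 y)) (if z = y then trivC else (buildA c n).1 z)
           else if z = y then trivC else (buildA c n).1 z)
        rw [if_neg hz.1]
        by_cases hzy : z = y
        · rw [if_pos hzy]; exact sat_trivC _ _ _
        · rw [if_neg hzy]
          exact S.triv z (fun hmem => hzy (hz.2 hmem)) F θ u
      · intro F g θ hD
        have hD' : ∀ z, sat F θ (g z)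
            (if z = x then
              MF.and (.dia l ((buildA c n).1 y)) (if z = y then trivC else (buildA c n).1 z)
             else if z = y then trivC else (buildA c n).1 z) := hD
        have hx := hD' x
        rw [if_pos rfl] at hx
        obtain ⟨v, hRv, hv⟩ := hx.1
        refine ⟨v, hRv, ?_⟩
        apply S.sound F (Function.update g y v) θ
        intro z
        by_cases hzy : z = y
        · subst hzy
          rw [Function.update_self]
          exact hv
        · rw [Function.update_of_ne hzy]
          by_cases hzx : z = x
          · subst hzx
            have h := hx.2
            rw [if_neg hzy] at h
            exact h
          · have h := hD' z
            rw [if_neg hzx, if_neg hzy] at h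
            exact h
      · intro F g θ₀ hold
        obtain ⟨v, hRv, hold'⟩ := hold
        obtain ⟨θ, hext, hsat⟩ := S.compl F (Function.update g y v) θ₀ hold'
        refine ⟨θ, hext, ?_⟩
        intro z
        show sat F θ (g z)
          (if z = x then
            MF.and (.dia l ((buildA c n).1 y)) (if z = y then trivC else (buildA c n).1 z)
           else if z = y then trivC else (buildA c n).1 z)
        by_cases hzx : z = x
        · rw [if_pos hzx]
          constructor
          · refine ⟨v, hzx ▸ hRv, ?_⟩
            have h := hsat y
            rw [Function.update_self] at h
            exact h
          · by_cases hzy : z = y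
            · rw [if_pos hzy]; exact sat_trivC _ _ _
            · rw [if_neg hzy]
              have h := hsat z
              rw [Function.update_of_ne hzy] at h
              exact h
        · rw [if_neg hzx]
          by_cases hzy : z = y
          · rw [if_pos hzy]; exact sat_trivC _ _ _
          · rw [if_neg hzy]
            have h := hsat z
            rw [Function.update_of_ne hzy] at h
            exact h

/-- The generalized-Sahlqvist "truth" formula. -/
def gsTop : MF Λ (ℕ × ℕ) := .imp (.neg .top) .bot

lemma gsf_gsTop : GSF (gsTop : MF Λ (ℕ × ℕ)) := GSF.impl (GSAnt.neg Positive.top)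

@[simp] lemma sat_gsTop (F : Frame Λ) (θ : ℕ × ℕ → Set F.W) (u : F.W) :
    sat F θ u (gsTop : MF Λ (ℕ × ℕ)) := by
  intro h
  exact h trivial

lemma sat_foldr_and (F : Frame Λ) (θ : ℕ × ℕ → Set F.W) (u : F.W)
    (L : List (MF Λ (ℕ × ℕ))) :
    sat F θ u (L.foldr .and gsTop) ↔ ∀ ψ ∈ L, sat F θ u ψ := by
  induction L with
  | nil => simp
  | cons a as ihs =>
      simp only [List.foldr_cons, sat_and, ihs, List.mem_cons]
      constructor
      · rintro ⟨h1, h2⟩ ψ (rfl | h)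
        · exact h1
        · exact h2 ψ h
      · intro h
        exact ⟨h a (Or.inl rfl), fun ψ hψ => h ψ (Or.inr hψ)⟩

lemma gsf_foldr (L : List (MF Λ (ℕ × ℕ))) (h : ∀ ψ ∈ L, GSF ψ) :
    GSF (L.foldr .and gsTop) := by
  induction L with
  | nil => exact gsf_gsTop
  | cons a as ihs =>
      exact GSF.and (h a List.mem_cons_self)
        (ihs fun ψ hψ => h ψ (List.mem_cons_of_mem a hψ))

/-- The local correspondence for a single clause. -/
lemma clause_corr (c : Cl Λ) (hqs : Cl.QS c) (x₀ : ℕ) (hfv : Cl.fv c ⊆ {x₀})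
    (F : Frame Λ) (w : F.W) :
    (∃ θ : ℕ × ℕ → Set F.W, sat F θ w ((buildA c 0).1 x₀)) ↔
      ∃ g : ℕ → F.W, g x₀ = w ∧ Cl.holds F g c := by
  have S := buildA_spec c hqs 0
  constructor
  · rintro ⟨θ, hθ⟩
    refine ⟨fun _ => w, rfl, ?_⟩
    apply S.sound F (fun _ => w) θ
    intro z
    by_cases hz : z = x₀
    · subst hz; exact hθ
    · exact S.triv z (fun hmem => hz (hfv hmem)) F θ w
  · rintro ⟨g, hg, hold⟩
    obtain ⟨θ, _, hsat⟩ := S.compl F g (fun _ => ∅) hold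
    exact ⟨θ, hg ▸ hsat x₀⟩

end Aux19

/-- every first-order formula with one free variable obtained from quasi-safe
atoms using only conjunction, disjunction and restricted universal quantification is the
local first-order correspondent of some generalized Sahlqvist formula. -/
theorem statement19 {Λ : Type u} (α : KrF Λ) (x₀ : ℕ)
    (h₁ : α.NoEx) (h₂ : α.AtomsAll QuasiSafe) (h₃ : α.fv = {x₀}) :
    ∃ φ : MF Λ (ℕ × ℕ), GSF φ ∧
      ∀ (F : Frame Λ) (w : F.W),
        (∀ θ : ℕ × ℕ → Set F.W, sat F θ w φ) ↔
          ∀ g : ℕ → F.W, g x₀ = w → KrF.holds F g α := by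
  obtain ⟨L, hL, hequiv⟩ := nf_exists α h₁ h₂
  refine ⟨(L.map fun c => MF.imp ((buildA c 0).1 x₀) .bot).foldr .and gsTop, ?_, ?_⟩
  · apply gsf_foldr
    intro ψ hψ
    obtain ⟨c, hc, rfl⟩ := List.mem_map.mp hψ
    exact GSF.impl ((buildA_spec.{u, 0} c (hL c hc).1 0).gsa x₀)
  · intro F w
    have hfv : ∀ c ∈ L, Cl.fv c ⊆ {x₀} := fun c hc => h₃ ▸ (hL c hc).2
    constructor
    · intro h g hg
      rw [hequiv F g]
      intro c hc hold
      obtain ⟨θ, hθ⟩ := (clause_corr c (hL c hc).1 x₀ (hfv c hc) F w).mpr ⟨g, hg, hold⟩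
      have h2 := (sat_foldr_and F θ w _).mp (h θ) (MF.imp ((buildA c 0).1 x₀) .bot)
        (List.mem_map.mpr ⟨c, hc, rfl⟩)
      exact h2 hθ
    · intro h θ
      rw [sat_foldr_and]
      intro ψ hψ
      obtain ⟨c, hc, rfl⟩ := List.mem_map.mp hψ
      intro hA
      obtain ⟨g, hg, hold⟩ := (clause_corr c (hL c hc).1 x₀ (hfv c hc) F w).mp ⟨θ, hA⟩
      exact (hequiv F g).mp (h g hg) c hc hold
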